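/- Let α < 0 < β, 0 < ε < 8/(β−α), and let k₁, k ∈ ℤ and p, q ∈ ℝ with ε(k₁ + 1/4) < p < ε(k₁ + 3/4) (so p lies in the open β-phase of g_ε) and q = ε(k + 3/4) with q > ε(k₁ + 5/4). Set ℓ := q − p, σ := ε(k₁ + 3/4) − p ∈ (0, ε/2), ℓ* := q − ε(k₁ + 5/4), σ* := (ε/2)·((β−α)(ℓ* + ε/2) − 4)/((β−α)(ℓ* − ε/2) + 4), and v := −2/ℓ + (α+β)/2 + ((β−α)/(2ℓ))σ, and assume (β−α)(ℓ* + ε/2 + 2σ) > 4. Then there exists a Lipschitz function n : [p,q] → [−1,1] with n(p) = 1, n(q) = −1 and n'(x) = v − g(x/ε) for almost every x ∈ [p,q] if and only if σ ≥ σ*. -/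

import Mathlib

open MeasureTheory Set Filter Topology

/-- The 1-periodic forcing term: `α` within distance `1/4` of the integers, `β` otherwise. -/
noncomputable def g (α β x : ℝ) : ℝ := if |x - (round x : ℝ)| ≤ 1/4 then α else β

/-- The edge `[p,q]` with endpoint values `a`, `b` is calibrated with velocity `v` by the
Lipschitz field `n : [p,q] → [-1,1]` satisfying `n' = v - g(·/ε)` a.e. on `[p,q]`. -/
def Calibrates (α β ε p q a b v : ℝ) (n : ℝ → ℝ) : Prop :=
  (∃ K : NNReal, LipschitzOnWith K n (Icc p q)) ∧
  (∀ x ∈ Icc p q, n x ∈ Icc (-1 : ℝ) 1) ∧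
  n p = a ∧ n q = b ∧
  ∀ᵐ x ∂(volume.restrict (Icc p q)), HasDerivAt n (v - g α β (x / ε)) x



lemma myRoundIntAdd (K : ℤ) (d : ℝ) (h1 : -(1/2) ≤ d) (h2 : d < 1/2) :
    round ((K : ℝ) + d) = K := by
  rw [round_eq, Int.floor_eq_iff]
  constructor <;> push_cast <;> linarith

lemma round_eq_of_int (y : ℝ) (K : ℤ) (h1 : -(1/2) ≤ y - K) (h2 : y - K < 1/2) : round y = K := by
  have := myRoundIntAdd K (y - K) h1 h2
  simpa using this

lemma abs_sub_round_le_int (t : ℝ) (K : ℤ) : |t - round t| ≤ |t - K| := by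
  rcases lt_or_ge |t - K| (1/2) with h | h
  · have h' := abs_lt.1 h
    rw [round_eq_of_int t K (by linarith) (by linarith)]
  · exact (abs_sub_round t).trans h

lemma abs_sub_round_lip (s t : ℝ) : abs (|s - round s| - |t - round t|) ≤ |s - t| := by
  rw [abs_sub_le_iff]
  constructor
  · have h1 : |s - round s| ≤ |s - (round t : ℝ)| := abs_sub_round_le_int s (round t)
    have h2 : |s - (round t : ℝ)| ≤ |s - t| + |t - round t| := by
      calc |s - (round t : ℝ)| = |(s - t) + (t - round t)| := by ring_nf
        _ ≤ |s - t| + |t - round t| := abs_add_le _ _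
    linarith
  · have h1 : |t - round t| ≤ |t - (round s : ℝ)| := abs_sub_round_le_int t (round s)
    have h2 : |t - (round s : ℝ)| ≤ |t - s| + |s - round s| := by
      calc |t - (round s : ℝ)| = |(t - s) + (s - round s)| := by ring_nf
        _ ≤ |t - s| + |s - round s| := abs_add_le _ _
    rw [abs_sub_comm t s] at h2
    linarith

lemma g_eq_alpha (α β y : ℝ) (K : ℤ) (h : |y - K| ≤ 1/4) : g α β y = α := by
  have h' := abs_le.1 h
  have hr : round y = K := round_eq_of_int y K (by linarith) (by linarith)
  rw [g, hr, if_pos h]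

lemma g_eq_beta (α β y : ℝ) (K : ℤ) (h1 : (K : ℝ) + 1/4 < y) (h2 : y < K + 3/4) :
    g α β y = β := by
  rcases lt_or_ge y (K + 1/2) with h | h
  · have hr : round y = K := round_eq_of_int y K (by linarith) (by linarith)
    rw [g, hr, if_neg]
    rw [abs_of_pos (by linarith)]
    intro hc; linarith
  · have hr : round y = K + 1 := round_eq_of_int y (K + 1) (by push_cast; linarith) (by push_cast; linarith)
    rw [g, hr, if_neg]
    push_cast
    rw [abs_of_neg (by linarith)]
    intro hc; linarith


lemma mono_ftc_le {f φ : ℝ → ℝ} (hf : Monotone f) (hcont : Continuous f) {a b : ℝ} (hab : a ≤ b)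
    (hd : ∀ᵐ x ∂(volume.restrict (Ioc a b)), HasDerivAt f (φ x) x)
    (hint : IntegrableOn φ (Ioc a b)) : ∫ x in Ioc a b, φ x ≤ f b - f a := by
  set μ := hf.stieltjesFunction.measure with hμ
  have hμeq : ∀ x, hf.stieltjesFunction x = f x := by
    intro x
    rw [hf.stieltjesFunction_eq]
    exact rightLim_eq_of_tendsto
      (hcont.continuousAt.tendsto.mono_left nhdsWithin_le_nhds)
  have key : ∀ᵐ x ∂(volume.restrict (Ioc a b)), φ x = (μ.rnDeriv volume x).toReal := by
    filter_upwards [hd, ae_restrict_of_ae hf.ae_hasDerivAt] with x h1 h2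
    exact h1.unique h2
  rw [integral_congr_ae key]
  have h1 : ∫ x in Ioc a b, (μ.rnDeriv volume x).toReal ≤ (μ (Ioc a b)).toReal := by
    rw [integral_toReal ((μ.measurable_rnDeriv volume).aemeasurable.restrict)
      (ae_restrict_of_ae (μ.rnDeriv_lt_top volume))]
    apply ENNReal.toReal_mono
    · exact (measure_Ioc_lt_top (a := a) (b := b) (μ := μ)).ne
    · exact Measure.setLIntegral_rnDeriv_le _
  have h2 : (μ (Ioc a b)).toReal = f b - f a := by
    rw [hμ, StieltjesFunction.measure_Ioc, hμeq, hμeq,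
      ENNReal.toReal_ofReal (sub_nonneg.2 (hf hab))]
  linarith

lemma lipschitz_ftc {n φ : ℝ → ℝ} {K : NNReal} (hn : LipschitzWith K n) {a b : ℝ} (hab : a ≤ b)
    (hd : ∀ᵐ x ∂(volume.restrict (Ioc a b)), HasDerivAt n (φ x) x)
    (hint : IntegrableOn φ (Ioc a b)) : ∫ x in Ioc a b, φ x = n b - n a := by
  have hconst : IntegrableOn (fun _ : ℝ => (K : ℝ)) (Ioc a b) :=
    integrableOn_const measure_Ioc_lt_top.ne enorm_ne_top
  have habs : ∀ x y : ℝ, |n x - n y| ≤ K * |x - y| := by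
    intro x y
    have := hn.dist_le_mul x y
    rwa [Real.dist_eq, Real.dist_eq] at this
  have mono1 : Monotone fun x => n x + K * x := by
    intro x y hxy
    have h := habs x y
    rw [abs_sub_comm x y, abs_of_nonneg (by linarith : (0:ℝ) ≤ y - x)] at h
    have h2 := le_abs_self (n x - n y)
    simp only []
    linarith
  have mono2 : Monotone fun x => K * x - n x := by
    intro x y hxy
    have h := habs x y
    rw [abs_sub_comm x y, abs_of_nonneg (by linarith : (0:ℝ) ≤ y - x)] at h
    have h2 := neg_abs_le (n x - n y)
    simp only []
    linarith
  have cont1 : Continuous fun x : ℝ => n x + K * x :=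
    hn.continuous.add (continuous_const.mul continuous_id)
  have cont2 : Continuous fun x : ℝ => K * x - n x :=
    (continuous_const.mul continuous_id).sub hn.continuous
  have d1 : ∀ᵐ x ∂(volume.restrict (Ioc a b)),
      HasDerivAt (fun x => n x + K * x) (φ x + K) x := by
    filter_upwards [hd] with x h
    exact (h.add (((hasDerivAt_id x).const_mul (K : ℝ)))).congr_deriv (by simp)
  have d2 : ∀ᵐ x ∂(volume.restrict (Ioc a b)),
      HasDerivAt (fun x => K * x - n x) ((K : ℝ) - φ x) x := by
    filter_upwards [hd] with x h
    exact ((((hasDerivAt_id x).const_mul (K : ℝ))).sub h).congr_deriv (by simp)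
  have A := mono_ftc_le mono1 cont1 hab d1 (hint.add hconst)
  have B := mono_ftc_le mono2 cont2 hab d2 (hconst.sub hint)
  have e1 : ∫ x in Ioc a b, (φ x + K) = (∫ x in Ioc a b, φ x) + K * (b - a) := by
    rw [integral_add hint hconst, setIntegral_const, Real.volume_real_Ioc_of_le hab, smul_eq_mul, mul_comm]
  have e2 : ∫ x in Ioc a b, ((K : ℝ) - φ x) = K * (b - a) - ∫ x in Ioc a b, φ x := by
    rw [integral_sub hconst hint, setIntegral_const, Real.volume_real_Ioc_of_le hab, smul_eq_mul, mul_comm]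
  rw [e1] at A
  rw [e2] at B
  linarith

lemma measurable_g (α β : ℝ) : Measurable (g α β) := by
  classical
  have hg : g α β = fun y => if y ∈ ⋃ (j : ℤ), Icc ((j:ℝ) - 1/4) ((j:ℝ) + 1/4) then α else β := by
    funext y
    by_cases h : |y - (round y : ℝ)| ≤ 1/4
    · rw [g, if_pos h, if_pos]
      exact mem_iUnion.2 ⟨round y, ⟨by linarith [(abs_le.1 h).1], by linarith [(abs_le.1 h).2]⟩⟩
    · rw [g, if_neg h, if_neg]
      intro hc
      rcases mem_iUnion.1 hc with ⟨j, hj⟩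
      exact h ((abs_sub_round_le_int y j).trans
        (abs_le.2 ⟨by linarith [hj.1], by linarith [hj.2]⟩))
  rw [hg]
  exact Measurable.ite (MeasurableSet.iUnion fun j => measurableSet_Icc) measurable_const
    measurable_const

lemma g_abs_le (α β y : ℝ) : |g α β y| ≤ max |α| |β| := by
  rw [g]; split_ifs
  · exact le_max_left _ _
  · exact le_max_right _ _

lemma g_intInt (α β ε : ℝ) (hε : ε ≠ 0) (a b : ℝ) :
    IntervalIntegrable (fun x => g α β (x/ε)) volume a b := by
  have m : Measurable fun x => g α β (x/ε) :=
    (measurable_g α β).comp (measurable_id.div_const ε)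
  constructor <;>
    exact Integrable.mono' (integrableOn_const measure_Ioc_lt_top.ne enorm_ne_top)
      m.aestronglyMeasurable.restrict (ae_of_all _ fun x => g_abs_le α β _)

lemma gint_alpha (α β ε : ℝ) (hε : 0 < ε) (j : ℤ) :
    ∫ x in (ε*(j+3/4))..(ε*(j+5/4)), g α β (x/ε) = α * (ε/2) := by
  rw [intervalIntegral.integral_of_le (by nlinarith : ε*(j+3/4) ≤ ε*(j+5/4))]
  rw [setIntegral_congr_fun measurableSet_Ioc (g := fun _ => α) (fun x hx => ?_)]
  · rw [setIntegral_const, Real.volume_real_Ioc_of_le (by nlinarith),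
      smul_eq_mul, mul_comm]
    congr 1; ring
  · have h1 : (j:ℝ) + 3/4 < x/ε := by rw [lt_div_iff₀ hε]; nlinarith [hx.1]
    have h2 : x/ε ≤ (j:ℝ) + 5/4 := by rw [div_le_iff₀ hε]; nlinarith [hx.2]
    apply g_eq_alpha α β _ (j+1)
    push_cast
    rw [abs_le]
    constructor <;> linarith

lemma gint_beta (α β ε : ℝ) (hε : 0 < ε) (j : ℤ) :
    ∫ x in (ε*(j+1/4))..(ε*(j+3/4)), g α β (x/ε) = β * (ε/2) := by
  rw [intervalIntegral.integral_of_le (by nlinarith : ε*(j+1/4) ≤ ε*(j+3/4)),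
    integral_Ioc_eq_integral_Ioo]
  rw [setIntegral_congr_fun measurableSet_Ioo (g := fun _ => β) (fun x hx => ?_)]
  · rw [setIntegral_const, Real.volume_real_Ioo_of_le (by nlinarith),
      smul_eq_mul, mul_comm]
    congr 1; ring
  · have h1 : (j:ℝ) + 1/4 < x/ε := by rw [lt_div_iff₀ hε]; nlinarith [hx.1]
    have h2 : x/ε < (j:ℝ) + 3/4 := by rw [div_lt_iff₀ hε]; nlinarith [hx.2]
    exact g_eq_beta α β _ j h1 h2

lemma gint_main (α β ε : ℝ) (hε : 0 < ε) (j : ℤ) : ∀ N : ℕ,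
    ∫ x in (ε*(j+3/4))..(ε*((j:ℝ)+N+3/4)), g α β (x/ε) = N * ((α+β) * (ε/2))
  | 0 => by norm_num
  | (N+1) => by
    have h1 := gint_main α β ε hε j N
    have hsplit : (∫ x in (ε*(j+3/4))..(ε*((j:ℝ)+N+3/4)), g α β (x/ε)) +
        ∫ x in (ε*((j:ℝ)+N+3/4))..(ε*((j:ℝ)+(N+1)+3/4)), g α β (x/ε) =
        ∫ x in (ε*(j+3/4))..(ε*((j:ℝ)+(N+1)+3/4)), g α β (x/ε) :=
      intervalIntegral.integral_add_adjacent_intervals (g_intInt α β ε hε.ne' _ _)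
        (g_intInt α β ε hε.ne' _ _)
    have hsplit2 : ∫ x in (ε*((j:ℝ)+N+3/4))..(ε*((j:ℝ)+N+5/4+1/2)), g α β (x/ε) =
        (∫ x in (ε*((j:ℝ)+N+3/4))..(ε*((j:ℝ)+N+5/4)), g α β (x/ε)) +
        ∫ x in (ε*((j:ℝ)+N+5/4))..(ε*((j:ℝ)+N+5/4+1/2)), g α β (x/ε) :=
      (intervalIntegral.integral_add_adjacent_intervals (g_intInt α β ε hε.ne' _ _)
        (g_intInt α β ε hε.ne' _ _)).symm
    have ha : ∫ x in (ε*((j:ℝ)+N+3/4))..(ε*((j:ℝ)+N+5/4)), g α β (x/ε) = α * (ε/2) := by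
      have := gint_alpha α β ε hε (j + N)
      push_cast at this
      convert this using 2 <;> ring
    have hb : ∫ x in (ε*((j:ℝ)+N+5/4))..(ε*((j:ℝ)+N+5/4+1/2)), g α β (x/ε) = β * (ε/2) := by
      have := gint_beta α β ε hε (j + N + 1)
      push_cast at this
      convert this using 2 <;> ring
    have he : ε*((j:ℝ)+N+5/4+1/2) = ε*((j:ℝ)+(N+1)+3/4) := by ring
    rw [he] at hsplit2 hb
    push_cast
    rw [← hsplit, h1, hsplit2, ha, hb]
    ring
set_option maxHeartbeats 4000000 in
theorem stmt12 (α β ε p q : ℝ) (k₁ k : ℤ) (hα : α < 0) (hβ : 0 < β)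
    (hε0 : 0 < ε) (hε : ε < 8 / (β - α))
    (hp1 : ε * (k₁ + 1/4) < p) (hp2 : p < ε * (k₁ + 3/4))
    (hq : q = ε * (k + 3/4)) (hqgt : ε * (k₁ + 5/4) < q)
    (σ lstar σstar v : ℝ)
    (hσ : σ = ε * (k₁ + 3/4) - p)
    (hlstar : lstar = q - ε * (k₁ + 5/4))
    (hσstar : σstar = ε / 2 * ((β - α) * (lstar + ε / 2) - 4)
      / ((β - α) * (lstar - ε / 2) + 4))
    (hv : v = -2 / (q - p) + (α + β) / 2 + (β - α) / (2 * (q - p)) * σ)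
    (hcond : 4 < (β - α) * (lstar + ε / 2 + 2 * σ)) :
    (∃ n : ℝ → ℝ, Calibrates α β ε p q 1 (-1) v n) ↔ σstar ≤ σ := by
  have hE : (0:ℝ) < β - α := by linarith
  have hσ0 : 0 < σ := by rw [hσ]; linarith
  have hσε : σ < ε/2 := by
    have h : ε*((k₁:ℝ)+3/4) - ε*((k₁:ℝ)+1/4) = ε/2 := by ring
    rw [hσ]; linarith
  have hkk : k₁ + 1 ≤ k := by
    have h1 : ε*((k₁:ℝ)+5/4) < ε*((k:ℝ)+3/4) := by rw [← hq]; exact hqgt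
    have h2 : (k₁:ℝ)+5/4 < (k:ℝ)+3/4 := lt_of_mul_lt_mul_left h1 hε0.le
    have : (k₁:ℝ) < k := by linarith
    exact_mod_cast Int.add_one_le_iff.2 (by exact_mod_cast this)
  have hm1 : (1:ℝ) ≤ (k:ℝ) - k₁ := by
    have : ((k₁+1 : ℤ):ℝ) ≤ (k:ℝ) := by exact_mod_cast hkk
    push_cast at this; linarith
  have hl : q - p = ε*((k:ℝ) - k₁) + σ := by rw [hq, hσ]; ring
  have hlpos : 0 < q - p := by nlinarith
  have hls : lstar = ε*((k:ℝ) - k₁) - ε/2 := by rw [hlstar, hq]; ring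
  have hlsl : q - p = lstar + ε/2 + σ := by rw [hl, hls]; ring
  have hlspos : ε/2 ≤ lstar := by rw [hls]; nlinarith
  have hEε : (β - α) * ε < 8 := by
    have := (lt_div_iff₀ hE).1 hε; linarith [this]
  have hEσ : (β - α) * σ < 4 := by nlinarith
  set c := v - (α+β)/2 with hcdef
  have hc : 2*(q-p)*c = (β-α)*σ - 4 := by
    have hne : q - p ≠ 0 := hlpos.ne'
    rw [hcdef, hv]
    field_simp
    ring
  have hcneg : c < 0 := by
    by_contra h'
    push_neg at h'
    have h2 := mul_nonneg (by linarith only [hlpos] : (0:ℝ) ≤ 2*(q-p)) h'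
    linarith only [hc, hEσ, h2]
  have hcd : c + (β-α)/2 = v - α := by rw [hcdef]; ring
  clear_value c
  have hαv : 0 < v - α := by
    have e : 2*(q-p)*(v-α) = 2*(q-p)*c + (β-α)*(q-p) := by rw [hcdef]; ring
    have h2 : 0 < 2*(q-p)*(v-α) := by rw [e, hc, hlsl]; linarith [hcond]
    by_contra h'
    push_neg at h'
    have h3 := mul_nonneg hlpos.le (by linarith : (0:ℝ) ≤ α - v)
    linarith only [h2, h3]
  have hβv : 0 < β - v := by
    have e : 2*(q-p)*(β-v) = (β-α)*(q-p) - 2*(q-p)*c := by rw [hcdef]; ring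
    have h2 : 0 < 2*(q-p)*(β-v) := by
      rw [e, hc, hl]
      linarith [mul_pos hE (mul_pos hε0 (by linarith : (0:ℝ) < (k:ℝ)-k₁))]
    by_contra h'
    push_neg at h'
    have h3 := mul_nonneg hlpos.le (by linarith : (0:ℝ) ≤ v - β)
    linarith only [h2, h3]
  have hD0 : 0 < (β-α)*(lstar - ε/2) + 4 := by nlinarith
  have hPid : 2*(q-p)*(-c*lstar + (β-α)*ε/4 - 2) =
      -σ*((β-α)*(lstar - ε/2) + 4) + ε/2*((β-α)*(lstar+ε/2)-4) := by
    linear_combination (-lstar) * hc + ((β-α)*ε/2 - 4) * hlsl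
  have hKIiff : σstar ≤ σ ↔ -c*lstar + (β-α)*ε/4 ≤ 2 := by
    rw [hσstar, div_le_iff₀ hD0]
    constructor
    · intro h
      by_contra h'
      push_neg at h'
      have h2 := mul_pos hlpos (by linarith : (0:ℝ) < -c*lstar + (β-α)*ε/4 - 2)
      linarith only [hPid, h2, h]
    · intro h
      have h2 := mul_nonneg hlpos.le (by linarith : (0:ℝ) ≤ 2 - (-c*lstar + (β-α)*ε/4))
      linarith only [hPid, h2]
  constructor
  · -- existence → σstar ≤ σ
    rintro ⟨n, ⟨K, hK⟩, hbd, hnp, hnq, hae⟩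
    apply hKIiff.2
    obtain ⟨N, hNlip, hNeq⟩ := hK.extend_real
    obtain ⟨x₀, hx₀⟩ : ∃ x₀ : ℝ, x₀ = ε*((k₁:ℝ)+5/4) := ⟨_, rfl⟩
    have hx₀p : p < x₀ := by
      have : ε*((k₁:ℝ)+3/4) < ε*((k₁:ℝ)+5/4) := by nlinarith
      linarith
    have hx₀q : x₀ ≤ q := le_of_lt (by rw [hx₀]; exact_mod_cast hqgt)
    have hx₀mem : x₀ ∈ Icc p q := ⟨hx₀p.le, hx₀q⟩
    have hae2 : ∀ᵐ x ∂(volume.restrict (Ioc x₀ q)), HasDerivAt N (v - g α β (x/ε)) x := by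
      have h1 : ∀ᵐ x ∂(volume.restrict (Ioc x₀ q)), HasDerivAt n (v - g α β (x/ε)) x :=
        ae_restrict_of_ae_restrict_of_subset
          ((Ioc_subset_Icc_self).trans (Icc_subset_Icc hx₀p.le le_rfl)) hae
      have h2 : ∀ᵐ x ∂(volume.restrict (Ioc x₀ q)), x ∈ Ioc x₀ q :=
        ae_restrict_mem measurableSet_Ioc
      have h3 : ∀ᵐ x ∂(volume.restrict (Ioc x₀ q)), x ∉ ({q} : Set ℝ) :=
        ae_restrict_of_ae ((Set.countable_singleton q).ae_notMem volume)
      filter_upwards [h1, h2, h3] with x hx1 hx2 hx3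
      have hopen : Ioo p q ∈ 𝓝 x :=
        Ioo_mem_nhds (lt_of_lt_of_le hx₀p hx2.1.le) (lt_of_le_of_ne hx2.2 hx3)
      have heq : N =ᶠ[𝓝 x] n := by
        filter_upwards [hopen] with y hy
        exact (hNeq (Ioo_subset_Icc_self hy)).symm
      exact hx1.congr_of_eventuallyEq heq
    have hint : IntegrableOn (fun x => v - g α β (x/ε)) (Ioc x₀ q) :=
      ((intervalIntegrable_const (c := v)).sub (g_intInt α β ε hε0.ne' x₀ q)).1
    have hFTC := lipschitz_ftc hNlip hx₀q hae2 hint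
    -- compute the integral of g
    have hb1 : ∫ x in (ε*((k₁:ℝ)+5/4))..(ε*((k₁:ℝ)+7/4)), g α β (x/ε) = β*(ε/2) := by
      have h := gint_beta α β ε hε0 (k₁+1)
      have e1 : ε*((((k₁+1):ℤ):ℝ)+1/4) = ε*((k₁:ℝ)+5/4) := by push_cast; ring
      have e2 : ε*((((k₁+1):ℤ):ℝ)+3/4) = ε*((k₁:ℝ)+7/4) := by push_cast; ring
      rwa [e1, e2] at h
    have hm0 : ∫ x in (ε*((k₁:ℝ)+7/4))..q, g α β (x/ε) = ((k:ℝ) - k₁ - 1)*((α+β)*(ε/2)) := by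
      have h := gint_main α β ε hε0 (k₁+1) (k - k₁ - 1).toNat
      have hc1 : (((k - k₁ - 1).toNat : ℕ) : ℝ) = (k:ℝ) - k₁ - 1 := by
        have h2 : (((k - k₁ - 1).toNat : ℕ) : ℤ) = k - k₁ - 1 := Int.toNat_of_nonneg (by omega)
        exact_mod_cast congrArg (fun z : ℤ => (z : ℝ)) h2
      rw [hc1] at h
      have e1 : ε*((((k₁+1):ℤ):ℝ)+3/4) = ε*((k₁:ℝ)+7/4) := by push_cast; ring
      have e2 : ε*((((k₁+1):ℤ):ℝ)+((k:ℝ)-(k₁:ℝ)-1)+3/4) = ε*((k:ℝ)+3/4) := by push_cast; ring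
      rw [e1, e2, ← hq] at h
      exact h
    have hsplit : (∫ x in x₀..(ε*((k₁:ℝ)+7/4)), g α β (x/ε)) +
        (∫ x in (ε*((k₁:ℝ)+7/4))..q, g α β (x/ε)) = ∫ x in x₀..q, g α β (x/ε) :=
      intervalIntegral.integral_add_adjacent_intervals (g_intInt α β ε hε0.ne' _ _)
        (g_intInt α β ε hε0.ne' _ _)
    have hgval : ∫ x in x₀..q, g α β (x/ε) = β*(ε/2) + ((k:ℝ) - k₁ - 1)*((α+β)*(ε/2)) := by
      rw [← hsplit, hm0]
      rw [hx₀, hb1]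
    have hIval : ∫ x in Ioc x₀ q, (v - g α β (x/ε)) =
        v*(q - x₀) - (β*(ε/2) + ((k:ℝ) - k₁ - 1)*((α+β)*(ε/2))) := by
      rw [← intervalIntegral.integral_of_le hx₀q,
        intervalIntegral.integral_sub intervalIntegrable_const (g_intInt α β ε hε0.ne' _ _),
        intervalIntegral.integral_const, hgval, smul_eq_mul, mul_comm]
    have hnx₀ : n x₀ ≤ 1 := (hbd x₀ hx₀mem).2
    have hNq : N q = n q := (hNeq (right_mem_Icc.2 (hx₀p.le.trans hx₀q))).symm
    have hNx₀ : N x₀ = n x₀ := (hNeq hx₀mem).symm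
    rw [hIval, hNq, hNx₀, hnq] at hFTC
    -- hFTC : v*(q-x₀) - (...) = -1 - n x₀ ≥ -2
    have hqx₀ : q - x₀ = lstar := by rw [hx₀, hlstar]
    rw [hqx₀] at hFTC
    have hval : v*lstar - (β*(ε/2) + ((k:ℝ) - k₁ - 1)*((α+β)*(ε/2))) =
        c*lstar - (β-α)*ε/4 := by
      rw [hcdef, hls]; ring
    linarith only [hFTC, hnx₀, hval]
  · -- σstar ≤ σ → existence
    intro hσs
    have hKI : -c*lstar + (β-α)*ε/4 ≤ 2 := hKIiff.1 hσs
    classical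
    obtain ⟨D, hD⟩ : ∃ D : ℝ, D = (β-α)/2 := ⟨_, rfl⟩
    have hDpos : 0 < D := by rw [hD]; linarith
    obtain ⟨w, hw⟩ : ∃ w : ℝ → ℝ, w = fun t => |t - ((round t : ℤ) : ℝ)| := ⟨_, rfl⟩
    obtain ⟨nn, hnn⟩ : ∃ nn : ℝ → ℝ, nn = fun x => -1 - c*(q - x) + D*ε*(w ((q - x)/ε)) :=
      ⟨_, rfl⟩
    have hwv : ∀ t, w t = |t - ((round t : ℤ) : ℝ)| := fun t => by rw [hw]
    have hwnonneg : ∀ t, 0 ≤ w t := fun t => by rw [hwv]; exact abs_nonneg _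
    have hwhalf : ∀ t, w t ≤ 1/2 := fun t => by rw [hwv]; exact abs_sub_round t
    refine ⟨nn, ⟨(|c| + D).toNNReal, ?_⟩, ?_, ?_, ?_, ?_⟩
    · -- Lipschitz
      apply LipschitzOnWith.of_dist_le_mul
      intro x _ y _
      rw [Real.dist_eq, Real.dist_eq, Real.coe_toNNReal _ (by positivity)]
      have h1 : abs (w ((q-x)/ε) - w ((q-y)/ε)) ≤ |(q-x)/ε - (q-y)/ε| := by
        rw [hwv, hwv]; exact abs_sub_round_lip _ _
      have h2 : |(q-x)/ε - (q-y)/ε| = |x - y|/ε := by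
        rw [div_sub_div_same, abs_div, abs_of_pos hε0, abs_sub_comm]
        congr 1; ring
      have h3 : nn x - nn y = c*(x-y) + D*ε*(w ((q-x)/ε) - w ((q-y)/ε)) := by
        simp only [hnn]; ring
      calc |nn x - nn y| = |c*(x-y) + D*ε*(w ((q-x)/ε) - w ((q-y)/ε))| := by rw [h3]
        _ ≤ |c * (x-y)| + |D*ε*(w ((q-x)/ε) - w ((q-y)/ε))| := abs_add_le _ _
        _ = |c| * |x - y| + D*ε*(abs (w ((q-x)/ε) - w ((q-y)/ε))) := by
            rw [abs_mul, abs_mul, abs_mul, abs_of_pos hDpos, abs_of_pos hε0]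
        _ ≤ |c| * |x - y| + D*ε*(|x - y| / ε) := by
            have := h2 ▸ h1
            gcongr
        _ = (|c| + D) * |x - y| := by field_simp
    · -- bounds
      intro x hx
      have ht0 : 0 ≤ q - x := by linarith [hx.2]
      have htl : q - x ≤ q - p := by linarith [hx.1]
      constructor
      · -- lower bound
        simp only [hnn]
        linarith only [mul_nonneg (mul_nonneg hDpos.le hε0.le) (hwnonneg ((q-x)/ε)),
          mul_nonneg (neg_nonneg.2 hcneg.le) ht0]
      · -- upper bound
        simp only [hnn]
        obtain ⟨t, htdef⟩ : ∃ t : ℝ, t = q - x := ⟨_, rfl⟩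
        rw [← htdef] at ht0 htl ⊢
        have hdiv : ε * (t/ε) = t := mul_div_cancel₀ t hε0.ne'
        rcases le_or_gt t lstar with hcase | hcase
        · have f1 : (-c)*t ≤ (-c)*lstar :=
            mul_le_mul_of_nonneg_left hcase (neg_nonneg.2 hcneg.le)
          have f2 : D*ε*(w (t/ε)) ≤ D*ε*(1/2) :=
            mul_le_mul_of_nonneg_left (hwhalf _) (mul_nonneg hDpos.le hε0.le)
          have f3 : D*ε = (β-α)*ε/2 := by rw [hD]; ring
          linarith only [f1, f2, f3, hKI]
        · have hvaD : v - α = c + D := by rw [hD]; linarith only [hcd]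
          rcases le_or_gt t (ε*((k:ℝ)-k₁)) with hcase2 | hcase2
          · have hwb : w (t/ε) ≤ ((k:ℝ)-k₁) - t/ε := by
              have h1 : w (t/ε) ≤ |t/ε - ((k - k₁ : ℤ):ℝ)| := by
                rw [hwv]; exact abs_sub_round_le_int _ _
              have h2 : t/ε ≤ (k:ℝ)-k₁ := by
                rw [div_le_iff₀ hε0]; linarith only [hcase2]
              rw [abs_of_nonpos (by push_cast; linarith only [h2])] at h1
              push_cast at h1; linarith only [h1]
            have hkey : D*ε*(w (t/ε)) ≤ D*ε*(((k:ℝ)-k₁) - t/ε) :=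
              mul_le_mul_of_nonneg_left hwb (mul_nonneg hDpos.le hε0.le)
            have hexp : D*ε*(((k:ℝ)-k₁) - t/ε) = D*(ε*((k:ℝ)-k₁)) - D*t := by
              have : D*ε*(t/ε) = D*t := by rw [mul_assoc, hdiv]
              linarith only [this]
            have f4 : (c + D)*lstar ≤ (c + D)*t :=
              mul_le_mul_of_nonneg_left hcase.le
                (by linarith only [hαv, hvaD] : (0:ℝ) ≤ c + D)
            have f5 : D*lstar = D*(ε*((k:ℝ)-k₁)) - D*(ε/2) := by rw [hls]; ring
            have f3 : D*ε = (β-α)*ε/2 := by rw [hD]; ring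
            linarith only [hkey, hexp, f4, f5, f3, hKI]
          · have hvbD : β - v = D - c := by rw [hD, hcdef]; ring
            have hwb : w (t/ε) ≤ t/ε - ((k:ℝ)-k₁) := by
              have h1 : w (t/ε) ≤ |t/ε - ((k - k₁ : ℤ):ℝ)| := by
                rw [hwv]; exact abs_sub_round_le_int _ _
              have h2 : (k:ℝ)-k₁ ≤ t/ε := by
                rw [le_div_iff₀ hε0]; linarith only [hcase2]
              rw [abs_of_nonneg (by push_cast; linarith only [h2])] at h1
              push_cast at h1; linarith only [h1]
            have hkey : D*ε*(w (t/ε)) ≤ D*ε*(t/ε - ((k:ℝ)-k₁)) :=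
              mul_le_mul_of_nonneg_left hwb (mul_nonneg hDpos.le hε0.le)
            have hexp : D*ε*(t/ε - ((k:ℝ)-k₁)) = D*t - D*(ε*((k:ℝ)-k₁)) := by
              have : D*ε*(t/ε) = D*t := by rw [mul_assoc, hdiv]
              linarith only [this]
            have f7 : (D - c)*t ≤ (D - c)*(q-p) :=
              mul_le_mul_of_nonneg_left htl (by linarith only [hβv, hvbD] : (0:ℝ) ≤ D - c)
            have f8 : D*(q-p) = D*(ε*((k:ℝ)-k₁)) + D*σ := by rw [hl]; ring
            have f9 : c*(q-p) = D*σ - 2 := by rw [hD]; linarith only [hc]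
            linarith only [hkey, hexp, f7, f8, f9]
    · -- value at p
      simp only [hnn]
      have hu : (q - p)/ε = ((k - k₁ : ℤ):ℝ) + σ/ε := by
        rw [hl]; push_cast; field_simp
      have hσdiv : σ/ε < 1/2 := by rw [div_lt_iff₀ hε0]; linarith
      have hσdiv0 : 0 < σ/ε := div_pos hσ0 hε0
      have hr : round ((q-p)/ε) = k - k₁ := by
        apply round_eq_of_int
        · rw [hu]; push_cast; linarith
        · rw [hu]; push_cast; linarith
      have hwval : w ((q-p)/ε) = σ/ε := by
        rw [hwv, hr, hu]
        push_cast
        rw [add_sub_cancel_left, abs_of_pos hσdiv0]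
      rw [hwval]
      have : D*ε*(σ/ε) = D*σ := by field_simp
      rw [this]
      -- -1 - c*(q-p) + D*σ = 1  using hc : 2(q-p)c = (β-α)σ - 4, D = (β-α)/2
      have : c*(q-p) = D*σ - 2 := by rw [hD]; linarith only [hc]
      linarith only [this]
    · -- value at q
      simp only [hnn]
      rw [hwv]
      norm_num
    · -- a.e. derivative
      refine ae_restrict_of_ae ?_
      filter_upwards [(Set.countable_range (fun j : ℤ => q - ε*(j:ℝ)/2)).ae_notMem volume]
        with x hx
      obtain ⟨u, hudef⟩ : ∃ u : ℝ, u = (q - x)/ε := ⟨_, rfl⟩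
      obtain ⟨r, hrdef⟩ : ∃ r : ℤ, r = round u := ⟨_, rfl⟩
      have hqx : q - x = ε * u := by rw [hudef, mul_div_cancel₀ _ hε0.ne']
      have hnot : ∀ j : ℤ, q - x ≠ ε*(j:ℝ)/2 := by
        intro j hj
        exact hx ⟨j, by linarith⟩
      have habs : |u - (r:ℝ)| ≤ 1/2 := by rw [hrdef]; exact abs_sub_round u
      have h0 : u - (r:ℝ) ≠ 0 := by
        intro h
        refine hnot (2*r) ?_
        rw [hqx, show u = ((r:ℤ):ℝ) by linarith only [h]]
        push_cast
        ring
      have hhalf : |u - (r:ℝ)| ≠ 1/2 := by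
        intro h
        rcases (abs_eq (by norm_num : (0:ℝ) ≤ 1/2)).1 h with h' | h'
        · refine hnot (2*r+1) ?_
          rw [hqx, show u = ((r:ℤ):ℝ) + 1/2 by linarith only [h']]
          push_cast
          ring
        · refine hnot (2*r-1) ?_
          rw [hqx, show u = ((r:ℤ):ℝ) - 1/2 by linarith only [h']]
          push_cast
          ring
      have habs' : |u - (r:ℝ)| < 1/2 := lt_of_le_of_ne habs hhalf
      have hb := abs_lt.1 habs'
      have hxe : x/ε = ((k:ℝ) + 3/4) - u := by
        have hh : x = q - ε*u := by linarith only [hqx]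
        rw [hh, hq]
        field_simp
      have hrw : ∀ y : ℝ, |(q - y)/ε - u| < min (|u - (r:ℝ)|) (1/2 - |u - (r:ℝ)|) →
          round ((q - y)/ε) = r ∧
          w ((q - y)/ε) = if 0 < u - (r:ℝ) then (q - y)/ε - (r:ℝ) else (r:ℝ) - (q - y)/ε := by
        intro y hy
        have hb2 := abs_lt.1 hy
        have hm1 : min (|u - (r:ℝ)|) (1/2 - |u - (r:ℝ)|) ≤ |u - (r:ℝ)| := min_le_left _ _
        have hm2 : min (|u - (r:ℝ)|) (1/2 - |u - (r:ℝ)|) ≤ 1/2 - |u - (r:ℝ)| := min_le_right _ _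
        rcases lt_or_gt_of_ne h0 with hneg | hpos
        · have habs2 : |u - (r:ℝ)| = -(u - (r:ℝ)) := abs_of_neg hneg
          have hry : round ((q - y)/ε) = r :=
            round_eq_of_int _ _ (by linarith only [hb2.1, habs2, hm2])
              (by linarith only [hb2.2, habs2, hm2, hneg])
          refine ⟨hry, ?_⟩
          rw [if_neg (by linarith only [hneg]), hwv, hry,
            abs_of_neg (by linarith only [hb2.2, habs2, hm1] :
              (q - y)/ε - ((r:ℤ):ℝ) < 0)]
          ring
        · have habs2 : |u - (r:ℝ)| = u - (r:ℝ) := abs_of_pos hpos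
          have hry : round ((q - y)/ε) = r :=
            round_eq_of_int _ _ (by linarith only [hb2.1, habs2, hm2, hpos])
              (by linarith only [hb2.2, habs2, hm2])
          refine ⟨hry, ?_⟩
          rw [if_pos (by linarith only [hpos]), hwv, hry,
            abs_of_pos (by linarith only [hb2.1, habs2, hm1] :
              0 < (q - y)/ε - ((r:ℤ):ℝ))]
      have hρpos : 0 < min (|u - (r:ℝ)|) (1/2 - |u - (r:ℝ)|) :=
        lt_min (abs_pos.2 h0) (by linarith only [habs'])
      have hball : Metric.ball x (ε*(min (|u - (r:ℝ)|) (1/2 - |u - (r:ℝ)|))) ∈ 𝓝 x :=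
        Metric.ball_mem_nhds x (mul_pos hε0 hρpos)
      have hsmall : ∀ y ∈ Metric.ball x (ε*(min (|u - (r:ℝ)|) (1/2 - |u - (r:ℝ)|))),
          |(q - y)/ε - u| < min (|u - (r:ℝ)|) (1/2 - |u - (r:ℝ)|) := by
        intro y hy
        rw [Metric.mem_ball, Real.dist_eq] at hy
        have he : (q - y)/ε - u = (x - y)/ε := by rw [hudef]; field_simp; ring
        rw [he, abs_div, abs_of_pos hε0, div_lt_iff₀ hε0, abs_sub_comm]
        linarith only [hy, mul_comm ε (min (|u - (r:ℝ)|) (1/2 - |u - (r:ℝ)|))]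
      rcases lt_or_gt_of_ne h0 with hneg | hpos
      · -- u - r < 0 : α-phase, derivative c + D
        have hev : nn =ᶠ[𝓝 x] fun y => (-1 - c*q - D*q + D*ε*r) + (c + D)*y := by
          filter_upwards [hball] with y hy
          obtain ⟨hry, hwy⟩ := hrw y (hsmall y hy)
          rw [if_neg (by linarith)] at hwy
          rw [hnn]
          simp only []
          rw [hwy]
          field_simp
          ring
        have hder : HasDerivAt (fun y : ℝ => (-1 - c*q - D*q + D*ε*r) + (c + D)*y) (c + D) x := by
          simpa using ((hasDerivAt_id x).const_mul (c + D)).const_add (-1 - c*q - D*q + D*ε*r)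
        have hgx : g α β (x/ε) = α := by
          apply g_eq_alpha α β _ (k - r + 1)
          rw [hxe]
          push_cast
          rw [abs_le]
          constructor <;> linarith [hb.1]
        rw [hgx, show v - α = c + D by rw [hcdef, hD]; ring]
        exact hder.congr_of_eventuallyEq hev
      · -- u - r > 0 : β-phase, derivative c - D
        have hev : nn =ᶠ[𝓝 x] fun y => (-1 - c*q + D*q - D*ε*r) + (c - D)*y := by
          filter_upwards [hball] with y hy
          obtain ⟨hry, hwy⟩ := hrw y (hsmall y hy)
          rw [if_pos (by linarith)] at hwy
          rw [hnn]
          simp only []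
          rw [hwy]
          field_simp
          ring
        have hder : HasDerivAt (fun y : ℝ => (-1 - c*q + D*q - D*ε*r) + (c - D)*y) (c - D) x := by
          simpa using ((hasDerivAt_id x).const_mul (c - D)).const_add (-1 - c*q + D*q - D*ε*r)
        have hgx : g α β (x/ε) = β := by
          apply g_eq_beta α β _ (k - r)
          · rw [hxe]; push_cast; linarith [hb.2]
          · rw [hxe]; push_cast; linarith
        rw [hgx, show v - β = c - D by rw [hcdef, hD]; ring]
        exact hder.congr_of_eventuallyEq hev
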